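/- For all n ≥ 2, i(n) = 3n/16 + 33/64 + (7ψ(n-2) + 5ψ(n-1))/2^(n+4). -/
import Mathlib


theorem stmt_4
    (psi : ℕ → ℤ)
    (hpsi0 : psi 0 = 1) (hpsi1 : psi 1 = 0)
    (hpsi : ∀ n : ℕ, 2 ≤ n → psi n = -2 * psi (n - 2) - psi (n - 1))
    (i a : ℕ → ℚ)
    (ha0 : a 0 = 0) (hi1 : i 1 = 1) (ha1 : a 1 = 0)
    (ha : ∀ n : ℕ, 2 ≤ n → a n = (i (n - 1) + a (n - 1)) / 2)
    (hi23 : ∀ n : ℕ, 2 ≤ n → n ≤ 3 → i n = i (n - 1))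
    (hi4 : i 4 = (i 1 + a 1 + i 2 + a 2) / 2)
    (hi5 : ∀ n : ℕ, 5 ≤ n → i n = (i 2 + a 2 + i (n - 3) + a (n - 3)) / 2) :
    ∀ n : ℕ, 2 ≤ n →
      i n = 3 * n / 16 + 33 / 64 + (7 * (psi (n - 2) : ℚ) + 5 * psi (n - 1)) / 2 ^ (n + 4) := by
  have hi2 : i 2 = 1 := by
    have h := hi23 2 (by norm_num) (by norm_num)
    rw [h]; exact hi1
  have ha2 : a 2 = 1/2 := by
    have h : a 2 = (i 1 + a 1) / 2 := ha 2 (by norm_num)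
    rw [h, hi1, ha1]; norm_num
  have hi3 : i 3 = 1 := by
    have h := hi23 3 (by norm_num) (by norm_num)
    rw [h]; exact hi2
  have ha3 : a 3 = 3/4 := by
    have h : a 3 = (i 2 + a 2) / 2 := ha 3 (by norm_num)
    rw [h, hi2, ha2]; norm_num
  have hi4' : i 4 = 5/4 := by
    rw [hi4, hi1, ha1, hi2, ha2]; norm_num
  have ha4 : a 4 = 7/8 := by
    have h : a 4 = (i 3 + a 3) / 2 := ha 4 (by norm_num)
    rw [h, hi3, ha3]; norm_num
  have hpsi2 : psi 2 = -2 := by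
    have h := hpsi 2 (by norm_num); rw [h, hpsi0, hpsi1]; norm_num
  have hpsi3 : psi 3 = 2 := by
    have h := hpsi 3 (by norm_num); rw [h, hpsi1, hpsi2]; norm_num
  have hps : ∀ m : ℕ, (psi (m + 2) : ℚ) = -2 * psi m - psi (m + 1) := by
    intro m
    have h : psi (m + 2) = -2 * psi m - psi (m + 1) := hpsi (m + 2) (by omega)
    push_cast [h]; ring
  suffices H : ∀ n : ℕ, 2 ≤ n →
      i n = 3 * n / 16 + 33 / 64 + (7 * (psi (n - 2) : ℚ) + 5 * psi (n - 1)) / 2 ^ (n + 4) ∧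
      a n = 3 * n / 16 + 9 / 64 + (-(psi (n - 2) : ℚ) - 3 * psi (n - 1)) / 2 ^ (n + 4) by
    exact fun n hn => (H n hn).1
  intro n
  induction n using Nat.strong_induction_on with
  | _ n IH =>
    intro hn
    match n, hn with
    | 2, _ => 
      constructor
      · rw [hi2]; rw [show (2:ℕ) - 2 = 0 from rfl, show (2:ℕ) - 1 = 1 from rfl, hpsi0, hpsi1]
        norm_num
      · rw [ha2]; rw [show (2:ℕ) - 2 = 0 from rfl, show (2:ℕ) - 1 = 1 from rfl, hpsi0, hpsi1]
        norm_num
    | 3, _ =>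
      constructor
      · rw [hi3, show (3:ℕ) - 2 = 1 from rfl, show (3:ℕ) - 1 = 2 from rfl, hpsi1, hpsi2]
        norm_num
      · rw [ha3, show (3:ℕ) - 2 = 1 from rfl, show (3:ℕ) - 1 = 2 from rfl, hpsi1, hpsi2]
        norm_num
    | 4, _ =>
      constructor
      · rw [hi4', show (4:ℕ) - 2 = 2 from rfl, show (4:ℕ) - 1 = 3 from rfl, hpsi2, hpsi3]
        norm_num
      · rw [ha4, show (4:ℕ) - 2 = 2 from rfl, show (4:ℕ) - 1 = 3 from rfl, hpsi2, hpsi3]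
        norm_num
    | (m + 5), _ =>
      obtain ⟨hI2, hA2⟩ := IH (m + 2) (by omega) (by omega)
      obtain ⟨hI4, hA4⟩ := IH (m + 4) (by omega) (by omega)
      have hstepA : a (m + 5) = (i (m + 4) + a (m + 4)) / 2 := ha (m + 5) (by omega)
      have hstepI : i (m + 5) = (i 2 + a 2 + i (m + 2) + a (m + 2)) / 2 :=
        hi5 (m + 5) (by omega)
      have e2 : (m + 2 : ℕ) - 2 = m := rfl
      have e2' : (m + 2 : ℕ) - 1 = m + 1 := rfl
      have e4 : (m + 4 : ℕ) - 2 = m + 2 := rfl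
      have e4' : (m + 4 : ℕ) - 1 = m + 3 := rfl
      have e5 : (m + 5 : ℕ) - 2 = m + 3 := rfl
      have e5' : (m + 5 : ℕ) - 1 = m + 4 := rfl
      rw [e2, e2'] at hI2 hA2
      rw [e4, e4'] at hI4 hA4
      have q2 := hps m
      have q3 := hps (m + 1)
      have q4 := hps (m + 2)
      have h2pos : (2 : ℚ) ^ (m + 2 + 4) ≠ 0 := by positivity
      have h4pos : (2 : ℚ) ^ (m + 4 + 4) ≠ 0 := by positivity
      have h5pos : (2 : ℚ) ^ (m + 5 + 4) ≠ 0 := by positivity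
      constructor
      · rw [e5, e5', hstepI, hi2, ha2, hI2, hA2]
        rw [show (m : ℕ) + 1 + 2 = m + 3 from rfl] at q3
        rw [show (m : ℕ) + 2 + 2 = m + 4 from rfl, show (m : ℕ) + 2 + 1 = m + 3 from rfl] at q4
        rw [q4, q3, q2]
        push_cast
        field_simp
        ring
      · rw [e5, e5', hstepA, hI4, hA4]
        rw [show (m : ℕ) + 1 + 2 = m + 3 from rfl] at q3
        rw [show (m : ℕ) + 2 + 2 = m + 4 from rfl, show (m : ℕ) + 2 + 1 = m + 3 from rfl] at q4
        rw [q4, q3, q2]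
        push_cast
        field_simp
        ring
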